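/- For every natural number m ≥ 31, φ(m) > m^(log 2 / log 3), where φ is Euler's totient function. More precisely, the only natural numbers m ≥ 1 for which φ(m) ≤ m^(log 2 / log 3) are m = 1, 2, 3, 4, 6, 10, 12, 18, 30. -/

import Mathlib

noncomputable def al : ℝ := Real.log 2 / Real.log 3

lemma log3_pos : (0:ℝ) < Real.log 3 := Real.log_pos (by norm_num)

lemma al_pos : 0 < al := div_pos (Real.log_pos (by norm_num)) log3_pos

lemma rpow_al_3 : (3:ℝ) ^ al = 2 := by
  rw [al, Real.rpow_def_of_pos (by norm_num), mul_div_cancel₀ _ (ne_of_gt log3_pos),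
    Real.exp_log (by norm_num)]

lemma al_le {a b : ℕ} (hb : 0 < b) (h : 2^b ≤ 3^a) : al ≤ (a:ℝ)/b := by
  rw [al, div_le_div_iff₀ log3_pos (by exact_mod_cast hb)]
  have h1 : Real.log (2^b : ℕ) ≤ Real.log (3^a : ℕ) :=
    Real.log_le_log (by positivity) (by exact_mod_cast h)
  push_cast at h1
  rw [Real.log_pow, Real.log_pow] at h1
  push_cast
  linarith

-- x^al < y  when x^a < y^b  (with 2^b ≤ 3^a so that al ≤ a/b)
lemma A_lt_gen {x y a b : ℕ} (hx : 1 ≤ x) (hy : 1 ≤ y) (hb : 0 < b)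
    (h2 : 2^b ≤ 3^a) (h : x^a < y^b) : (x:ℝ) ^ al < y := by
  have hx1 : (1:ℝ) ≤ (x:ℝ) := by exact_mod_cast hx
  have hle : (x:ℝ) ^ al ≤ (x:ℝ) ^ ((a:ℝ)/b) :=
    Real.rpow_le_rpow_of_exponent_le hx1 (al_le hb h2)
  refine lt_of_le_of_lt hle ?_
  have hyb : ((x:ℝ) ^ ((a:ℝ)/b)) ^ b < (y:ℝ) ^ b := by
    rw [← Real.rpow_natCast ((x:ℝ) ^ ((a:ℝ)/b)) b, ← Real.rpow_mul (by positivity),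
      div_mul_cancel₀ _ (by exact_mod_cast hb.ne' : (b:ℝ) ≠ 0), Real.rpow_natCast]
    exact_mod_cast h
  exact lt_of_pow_lt_pow_left₀ b (by positivity) hyb

lemma A_le_gen {x y a b : ℕ} (hx : 1 ≤ x) (hb : 0 < b)
    (h2 : 2^b ≤ 3^a) (h : x^a ≤ y^b) : (x:ℝ) ^ al ≤ y := by
  have hx1 : (1:ℝ) ≤ (x:ℝ) := by exact_mod_cast hx
  have hle : (x:ℝ) ^ al ≤ (x:ℝ) ^ ((a:ℝ)/b) :=
    Real.rpow_le_rpow_of_exponent_le hx1 (al_le hb h2)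
  refine le_trans hle ?_
  have hyb : ((x:ℝ) ^ ((a:ℝ)/b)) ^ b ≤ (y:ℝ) ^ b := by
    rw [← Real.rpow_natCast ((x:ℝ) ^ ((a:ℝ)/b)) b, ← Real.rpow_mul (by positivity),
      div_mul_cancel₀ _ (by exact_mod_cast hb.ne' : (b:ℝ) ≠ 0), Real.rpow_natCast]
    exact_mod_cast h
  exact le_of_pow_le_pow_left₀ hb.ne' (by positivity) hyb

-- y ≤ x^al  when 3^a ≤ x^b and y^b ≤ 2^a
lemma le_A_gen {x y a b : ℕ} (hb : 0 < b) (h3 : 3^a ≤ x^b) (h2 : y^b ≤ 2^a) :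
    (y:ℝ) ≤ (x:ℝ) ^ al := by
  have h3' : (3:ℝ) ^ ((a:ℝ)/b) ≤ (x:ℝ) := by
    refine le_of_pow_le_pow_left₀ hb.ne' (by positivity) ?_
    rw [← Real.rpow_natCast ((3:ℝ) ^ ((a:ℝ)/b)) b, ← Real.rpow_mul (by norm_num),
      div_mul_cancel₀ _ (by exact_mod_cast hb.ne' : (b:ℝ) ≠ 0), Real.rpow_natCast]
    exact_mod_cast h3
  have h2' : (y:ℝ) ≤ (2:ℝ) ^ ((a:ℝ)/b) := by
    refine le_of_pow_le_pow_left₀ hb.ne' (by positivity) ?_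
    rw [← Real.rpow_natCast ((2:ℝ) ^ ((a:ℝ)/b)) b, ← Real.rpow_mul (by norm_num),
      div_mul_cancel₀ _ (by exact_mod_cast hb.ne' : (b:ℝ) ≠ 0), Real.rpow_natCast]
    exact_mod_cast h2
  have key : (2:ℝ) ^ ((a:ℝ)/b) ≤ (x:ℝ) ^ al := by
    rw [← rpow_al_3, ← Real.rpow_mul (by norm_num), mul_comm, Real.rpow_mul (by norm_num)]
    exact Real.rpow_le_rpow (by positivity) h3' al_pos.le
  linarith

lemma A_mul (a b : ℕ) : ((a*b:ℕ):ℝ) ^ al = (a:ℝ)^al * (b:ℝ)^al := by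
  push_cast
  exact Real.mul_rpow (by positivity) (by positivity)

lemma A_pow3 (k : ℕ) : ((3^k:ℕ):ℝ) ^ al = 2^k := by
  push_cast
  rw [← Real.rpow_natCast (3:ℝ) k, ← Real.rpow_mul (by norm_num), mul_comm,
    Real.rpow_mul (by norm_num), rpow_al_3, Real.rpow_natCast]

lemma A_pow (p k : ℕ) : ((p^k:ℕ):ℝ) ^ al = ((p:ℝ)^al)^k := by
  push_cast
  rw [← Real.rpow_natCast (p:ℝ) k, ← Real.rpow_mul (by positivity), mul_comm,
    Real.rpow_mul (by positivity), Real.rpow_natCast]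

lemma A_mono {a b : ℕ} (h : a ≤ b) : (a:ℝ)^al ≤ (b:ℝ)^al :=
  Real.rpow_le_rpow (by positivity) (by exact_mod_cast h) al_pos.le

lemma A_pos {x : ℕ} (hx : 1 ≤ x) : 0 < (x:ℝ)^al :=
  Real.rpow_pos_of_pos (by exact_mod_cast hx) al

-- For an odd prime p, p^al ≤ p - 1
lemma Ap_le {p : ℕ} (hp : p.Prime) (hodd : p ≠ 2) : (p:ℝ)^al ≤ (p:ℝ) - 1 := by
  have hp3 : 3 ≤ p := by
    have := hp.two_le
    rcases Nat.lt_or_ge p 3 with h | h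
    · interval_cases p <;> simp_all
    · exact h
  have hcast : ((p-1:ℕ):ℝ) = (p:ℝ) - 1 := by
    have : 1 ≤ p := by omega
    push_cast [this]; ring
  rw [← hcast]
  by_cases h3 : p = 3
  · subst h3
    have hc3 : ((3:ℕ):ℝ) = (3:ℝ) := by norm_num
    rw [show (3:ℕ)-1 = 2 by norm_num, hc3, rpow_al_3]; norm_num
  · have hp5 : 4 ≤ p := by omega
    refine A_le_gen (by omega) (by norm_num) (by norm_num : 2^3 ≤ 3^2) ?_
    -- p^2 ≤ (p-1)^3
    obtain ⟨q, rfl⟩ : ∃ q, p = q + 4 := ⟨p - 4, by omega⟩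
    have : (q+4) - 1 = q + 3 := by omega
    rw [this]
    nlinarith [sq_nonneg q, q.zero_le]

-- totient of prime power lower bound: (p^k)^al ≤ φ(p^k) for odd prime p, k ≥ 1
lemma PP1 {p k : ℕ} (hp : p.Prime) (hodd : p ≠ 2) (hk : 0 < k) :
    ((p^k:ℕ):ℝ) ^ al ≤ (Nat.totient (p^k) : ℝ) := by
  rw [A_pow, Nat.totient_prime_pow hp hk]
  have hp1 : (1:ℝ) ≤ (p:ℝ) := by exact_mod_cast hp.one_lt.le
  have h1 : ((p:ℝ)^al)^k ≤ ((p:ℝ)-1)^k := by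
    apply pow_le_pow_left₀ (by positivity) (Ap_le hp hodd)
  refine h1.trans ?_
  have hc : ((p ^ (k - 1) * (p - 1) : ℕ) : ℝ) = (p:ℝ)^(k-1) * ((p:ℝ)-1) := by
    have : 1 ≤ p := hp.one_lt.le
    push_cast [this]; ring
  rw [hc]
  obtain ⟨j, rfl⟩ : ∃ j, k = j + 1 := ⟨k - 1, by omega⟩
  simp only [Nat.add_sub_cancel]
  rw [pow_succ]
  have : ((p:ℝ)-1)^j ≤ (p:ℝ)^j := pow_le_pow_left₀ (by linarith) (by linarith) j
  nlinarith [this, sub_nonneg.mpr hp1]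

lemma claimO : ∀ n : ℕ, Odd n →
    n ∈ ({1,3,5,9,15} : Finset ℕ) ∨ ((2*n:ℕ):ℝ)^al < (Nat.totient n : ℝ) := by
  intro n
  induction n using Nat.strong_induction_on with
  | _ n ih =>
  intro hodd
  by_cases hnS : n ∈ ({1,3,5,9,15} : Finset ℕ)
  · exact Or.inl hnS
  right
  have hn0 : n ≠ 0 := by rintro rfl; simp at hodd
  have hn1 : n ≠ 1 := by rintro rfl; simp at hnS
  set p := n.minFac with hpdef
  have hp : p.Prime := Nat.minFac_prime hn1
  have hpn : p ∣ n := Nat.minFac_dvd n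
  have hp2 : ¬ (2 ∣ n) := by
    rw [Nat.odd_iff] at hodd; omega
  have hpne2 : p ≠ 2 := fun h => hp2 (h ▸ hpn)
  have hp3 : 3 ≤ p := by
    have := hp.two_le; omega
  set k := n.factorization p with hkdef
  have hk : 0 < k := hp.factorization_pos_of_dvd hn0 hpn
  set t := n / p ^ k with htdef
  have ht : p ^ k * t = n := Nat.ordProj_mul_ordCompl_eq_self n p
  have hpt : ¬ p ∣ t := Nat.not_dvd_ordCompl hp hn0
  have htdvd : t ∣ n := Nat.ordCompl_dvd n p
  have ht0 : 0 < t := Nat.pos_of_ne_zero (fun h => hn0 (by rw [← ht, h, mul_zero]))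
  have htodd : Odd t := by
    rw [Nat.odd_iff] at hodd ⊢
    rcases Nat.even_or_odd t with he | ho
    · exfalso; exact hp2 ((even_iff_two_dvd.mp he).trans htdvd)
    · exact Nat.odd_iff.mp ho
  have htlt : t < n := by
    rw [← ht]
    have h1 : 1 < p ^ k := Nat.one_lt_pow hk.ne' hp.one_lt
    calc t = 1 * t := (one_mul t).symm
    _ < p ^ k * t := (Nat.mul_lt_mul_right ht0).mpr h1
  have hcop : Nat.Coprime (p ^ k) t :=
    Nat.Coprime.pow_left k ((Nat.Prime.coprime_iff_not_dvd hp).mpr hpt)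
  have htot : Nat.totient n = Nat.totient (p ^ k) * Nat.totient t := by
    rw [← ht, Nat.totient_mul hcop]
  clear_value p k t
  rcases ih t htlt htodd with htS | hbig
  case _ =>
    -- t ∈ {1,3,5,9,15}
    simp only [Finset.mem_insert, Finset.mem_singleton] at htS
    have h3dvd : ∀ s : ℕ, t = s → 3 ∣ s → False := by
      intro s hs h3
      have h3n : 3 ∣ n := dvd_trans (hs ▸ h3) htdvd
      have hle : p ≤ 3 := by rw [hpdef]; exact Nat.minFac_le_of_dvd (by norm_num) h3n
      have hp3' : p = 3 := by omega
      exact hpt (by rw [hs, hp3']; exact h3)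
    rcases htS with rfl | rfl | rfl | rfl | rfl
    · -- t = 1 : n = p^k
      rw [mul_one] at ht
      have hodd_p : p % 2 = 1 := Nat.odd_iff.mp (hp.odd_of_ne_two hpne2)
      have hcase : p = 3 ∨ p = 5 ∨ 7 ≤ p := by omega
      rcases hcase with rfl | rfl | hp7
      · -- p = 3, n = 3^k, k ≥ 3
        have hk3 : 3 ≤ k := by
          by_contra hlt
          push_neg at hlt
          interval_cases k
          · exact hnS (by rw [← ht]; decide)
          · exact hnS (by rw [← ht]; decide)
        obtain ⟨j, rfl⟩ : ∃ j, k = j + 3 := ⟨k - 3, by omega⟩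
        rw [← ht, Nat.totient_prime_pow hp (by omega)]
        refine A_lt_gen (Nat.one_le_iff_ne_zero.mpr (by positivity))
          (Nat.one_le_iff_ne_zero.mpr (by positivity)) (by norm_num)
          (by norm_num : 2^3 ≤ 3^2) ?_
        have e1 : (2 * 3 ^ (j+3)) ^ 2 = 4 * 3 ^ (2*j+6) := by ring
        have e2 : (3 ^ (j+3-1) * (3-1)) ^ 3 = 8 * 3 ^ (3*j+6) := by
          norm_num; ring
        rw [e1, e2]
        have h := Nat.pow_le_pow_right (show 1 ≤ 3 by norm_num)
          (show 2*j+6 ≤ 3*j+6 by omega)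
        nlinarith [pow_pos (show 0 < 3 by norm_num) (2*j+6)]
      · -- p = 5, n = 5^k, k ≥ 2
        have hk2 : 2 ≤ k := by
          by_contra hlt
          push_neg at hlt
          interval_cases k
          · exact hnS (by rw [← ht]; decide)
        obtain ⟨j, rfl⟩ : ∃ j, k = j + 2 := ⟨k - 2, by omega⟩
        rw [← ht, Nat.totient_prime_pow hp (by omega)]
        refine A_lt_gen (Nat.one_le_iff_ne_zero.mpr (by positivity))
          (Nat.one_le_iff_ne_zero.mpr (by positivity)) (by norm_num)
          (by norm_num : 2^3 ≤ 3^2) ?_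
        have e1 : (2 * 5 ^ (j+2)) ^ 2 = 2500 * 5 ^ (2*j) := by ring
        have e2 : (5 ^ (j+2-1) * (5-1)) ^ 3 = 8000 * 5 ^ (3*j) := by
          norm_num; ring
        rw [e1, e2]
        have h := Nat.pow_le_pow_right (show 1 ≤ 5 by norm_num)
          (show 2*j ≤ 3*j by omega)
        nlinarith [pow_pos (show 0 < 5 by norm_num) (2*j)]
      · -- p ≥ 7, n = p^k, k ≥ 1
        obtain ⟨j, rfl⟩ : ∃ j, k = j + 1 := ⟨k - 1, by omega⟩
        rw [← ht, Nat.totient_prime_pow hp (by omega)]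
        refine A_lt_gen (Nat.one_le_iff_ne_zero.mpr (by positivity)) ?_ (by norm_num)
          (by norm_num : 2^3 ≤ 3^2) ?_
        · have h1 : 1 ≤ p - 1 := by omega
          have h2 : 0 < p ^ (j+1-1) := pow_pos (by omega) _
          exact Nat.one_le_iff_ne_zero.mpr (by positivity)
        have e1 : (2 * p ^ (j+1)) ^ 2 = (4 * p^2) * p ^ (2*j) := by ring
        have e2 : (p ^ (j+1-1) * (p-1)) ^ 3 = (p-1)^3 * p ^ (3*j) := by
          simp only [Nat.add_sub_cancel]; ring
        rw [e1, e2]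
        have hq : 4 * p^2 < (p-1)^3 := by
          obtain ⟨q, rfl⟩ : ∃ q, p = q + 7 := ⟨p - 7, by omega⟩
          have : q + 7 - 1 = q + 6 := by omega
          rw [this]
          nlinarith [sq_nonneg q, q.zero_le]
        have hpow : p ^ (2*j) ≤ p ^ (3*j) :=
          Nat.pow_le_pow_right (by omega) (by omega)
        calc (4 * p^2) * p ^ (2*j) < (p-1)^3 * p ^ (2*j) := by
              exact (Nat.mul_lt_mul_right (pow_pos (by omega) _)).mpr hq
        _ ≤ (p-1)^3 * p ^ (3*j) := Nat.mul_le_mul_left _ hpow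
    · exact absurd rfl (fun h => h3dvd 3 h (by norm_num))
    · -- t = 5 : p = 3, n = 3^k * 5, k ≥ 2
      have hp5 : p ≠ 5 := fun h => hpt (by rw [h])
      have h5n : 5 ∣ n := dvd_trans (by norm_num) htdvd
      have hle : p ≤ 5 := by rw [hpdef]; exact Nat.minFac_le_of_dvd (by norm_num) h5n
      have hodd_p : p % 2 = 1 := Nat.odd_iff.mp (hp.odd_of_ne_two hpne2)
      have hp3' : p = 3 := by omega
      subst hp3'
      have hk2 : 2 ≤ k := by
        by_contra hlt
        push_neg at hlt
        interval_cases k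
        · exact hnS (by rw [← ht]; decide)
      rw [← ht, Nat.totient_mul hcop, Nat.totient_prime_pow hp (by omega)]
      have e0 : 2 * (3 ^ k * 5) = 10 * 3 ^ k := by ring
      rw [e0, A_mul, A_pow3]
      have hA10 : ((10:ℕ):ℝ)^al < 5 :=
        A_lt_gen (by norm_num) (by norm_num) (by norm_num)
          (by norm_num : 2^3 ≤ 3^2) (by norm_num : 10^2 < 5^3)
      have hnat : 5 * 2 ^ k ≤ 3 ^ (k-1) * 2 * Nat.totient 5 := by
        rw [show Nat.totient 5 = 4 by decide]
        obtain ⟨j, rfl⟩ : ∃ j, k = j + 2 := ⟨k - 2, by omega⟩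
        rw [show j + 2 - 1 = j + 1 from rfl]
        have h2j : 2 ^ j ≤ 3 ^ j := Nat.pow_le_pow_left (by norm_num) j
        calc 5 * 2 ^ (j+2) = 20 * 2 ^ j := by ring
        _ ≤ 20 * 3 ^ j := Nat.mul_le_mul_left _ h2j
        _ ≤ 3 ^ (j+1) * 2 * 4 := by
            have : 3 ^ (j+1) * 2 * 4 = 24 * 3 ^ j := by ring
            rw [this]
            exact Nat.mul_le_mul_right _ (by norm_num)
      have hnat' : (5:ℝ) * 2 ^ k ≤ ((3 ^ (k-1) * 2 * Nat.totient 5 : ℕ) : ℝ) := by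
        exact_mod_cast hnat
      have h2k : (0:ℝ) < 2 ^ k := by positivity
      push_cast at hnat' hA10 ⊢
      nlinarith [hA10, h2k, hnat']
    · exact absurd rfl (fun h => h3dvd 9 h (by norm_num))
    · exact absurd rfl (fun h => h3dvd 15 h (by norm_num))
  case _ =>
    -- t ∉ S case: use IH bound and PP1
    rw [htot, ← ht]
    have e0 : 2 * (p ^ k * t) = p ^ k * (2 * t) := by ring
    rw [e0, A_mul]
    have hPP := PP1 hp hpne2 hk
    have hApos : 0 < ((p^k:ℕ):ℝ)^al := A_pos (Nat.one_le_iff_ne_zero.mpr (by positivity))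
    have htpos : (0:ℝ) < (Nat.totient t : ℝ) := by
      exact_mod_cast Nat.totient_pos.mpr ht0
    calc ((p^k:ℕ):ℝ)^al * ((2*t:ℕ):ℝ)^al
        < ((p^k:ℕ):ℝ)^al * (Nat.totient t : ℝ) := by
          exact mul_lt_mul_of_pos_left hbig hApos
    _ ≤ (Nat.totient (p^k) : ℝ) * (Nat.totient t : ℝ) := by
          exact mul_le_mul_of_nonneg_right hPP htpos.le
    _ = (((p ^ k).totient * t.totient : ℕ) : ℝ) := by push_cast; ring

lemma even_case_helper {c d : ℕ} (j : ℕ) (hc : 0 < c) (h : c^7 < d^11 * 2) :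
    (2^(j+3)*c)^7 < (2^(j+2)*d)^11 := by
  have e1 : (2^(j+3)*c)^7 = c^7 * 2^(7*j+21) := by ring
  have e2 : (2^(j+2)*d)^11 = (d^11 * 2^(4*j+1)) * 2^(7*j+21) := by
    rw [mul_assoc, ← pow_add]
    have : 4*j+1 + (7*j+21) = 11*(j+2) := by ring
    rw [this]
    ring
  rw [e1, e2]
  refine (Nat.mul_lt_mul_right (pow_pos (by norm_num) _)).mpr ?_
  calc c^7 < d^11 * 2 := h
  _ ≤ d^11 * 2^(4*j+1) := by
      refine Nat.mul_le_mul_left _ ?_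
      calc (2:ℕ) = 2^1 := rfl
      _ ≤ 2^(4*j+1) := Nat.pow_le_pow_right (by norm_num) (by omega)

lemma claimC (m : ℕ) (hm : 1 ≤ m) :
    m ∈ ({1,2,3,4,6,10,12,18,30} : Finset ℕ) ∨ (m:ℝ)^al < (Nat.totient m : ℝ) := by
  by_cases hmE : m ∈ ({1,2,3,4,6,10,12,18,30} : Finset ℕ)
  · exact Or.inl hmE
  right
  have hm0 : m ≠ 0 := by omega
  rcases Nat.even_or_odd m with heven | hodd
  · -- m even
    have h2m : 2 ∣ m := even_iff_two_dvd.mp heven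
    set k := m.factorization 2 with hkdef
    have hk : 0 < k := Nat.Prime.factorization_pos_of_dvd Nat.prime_two hm0 h2m
    set n := m / 2 ^ k with hndef
    have ht : 2 ^ k * n = m := Nat.ordProj_mul_ordCompl_eq_self m 2
    have hpt : ¬ 2 ∣ n := Nat.not_dvd_ordCompl Nat.prime_two hm0
    have hnodd : Odd n := Nat.odd_iff.mpr (by omega)
    have hn0 : 0 < n := Nat.pos_of_ne_zero (fun h => hm0 (by rw [← ht, h, mul_zero]))
    have hcop : Nat.Coprime (2 ^ k) n :=
      Nat.Coprime.pow_left k ((Nat.Prime.coprime_iff_not_dvd Nat.prime_two).mpr hpt)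
    have htot : Nat.totient m = 2 ^ (k-1) * Nat.totient n := by
      rw [← ht, Nat.totient_mul hcop, Nat.totient_prime_pow Nat.prime_two hk]
      norm_num
    clear_value k n
    rcases claimO n hnodd with hnS | hbig
    · -- n ∈ {1,3,5,9,15}
      simp only [Finset.mem_insert, Finset.mem_singleton] at hnS
      have hkcase : k = 1 ∨ k = 2 ∨ 3 ≤ k := by omega
      rcases hkcase with rfl | rfl | hk3
      · -- k = 1 : m ∈ E, contradiction
        exfalso; apply hmE
        rw [← ht]
        rcases hnS with rfl | rfl | rfl | rfl | rfl <;> decide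
      · -- k = 2
        rcases hnS with rfl | rfl | rfl | rfl | rfl
        · exfalso; apply hmE; rw [← ht]; decide
        · exfalso; apply hmE; rw [← ht]; decide
        · -- m = 20
          rw [← ht, show (2:ℕ)^2*5 = 20 from rfl, show Nat.totient 20 = 8 by decide]
          exact_mod_cast A_lt_gen (by norm_num) (by norm_num) (by norm_num)
            (by norm_num : 2^3 ≤ 3^2) (by norm_num : 20^2 < 8^3)
        · -- m = 36
          rw [← ht, show (2:ℕ)^2*9 = 36 from rfl, show Nat.totient 36 = 12 by decide]
          exact_mod_cast A_lt_gen (by norm_num) (by norm_num) (by norm_num)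
            (by norm_num : 2^3 ≤ 3^2) (by norm_num : 36^2 < 12^3)
        · -- m = 60
          rw [← ht, show (2:ℕ)^2*15 = 60 from rfl, show Nat.totient 60 = 16 by decide]
          exact_mod_cast A_lt_gen (by norm_num) (by norm_num) (by norm_num)
            (by norm_num : 2^3 ≤ 3^2) (by norm_num : 60^2 < 16^3)
      · -- k ≥ 3
        obtain ⟨j, rfl⟩ : ∃ j, k = j + 3 := ⟨k - 3, by omega⟩
        rw [htot, ← ht]
        rcases hnS with rfl | rfl | rfl | rfl | rfl
        · rw [show Nat.totient 1 = 1 by decide]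
          refine A_lt_gen (Nat.one_le_iff_ne_zero.mpr (by positivity))
            (Nat.one_le_iff_ne_zero.mpr (by positivity)) (by norm_num)
            (by norm_num : 2^11 ≤ 3^7) ?_
          rw [show j+3-1 = j+2 from rfl]
          exact even_case_helper j (by norm_num) (by norm_num)
        · rw [show Nat.totient 3 = 2 by decide]
          refine A_lt_gen (Nat.one_le_iff_ne_zero.mpr (by positivity))
            (Nat.one_le_iff_ne_zero.mpr (by positivity)) (by norm_num)
            (by norm_num : 2^11 ≤ 3^7) ?_
          rw [show j+3-1 = j+2 from rfl]
          exact even_case_helper j (by norm_num) (by norm_num)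
        · rw [show Nat.totient 5 = 4 by decide]
          refine A_lt_gen (Nat.one_le_iff_ne_zero.mpr (by positivity))
            (Nat.one_le_iff_ne_zero.mpr (by positivity)) (by norm_num)
            (by norm_num : 2^11 ≤ 3^7) ?_
          rw [show j+3-1 = j+2 from rfl]
          exact even_case_helper j (by norm_num) (by norm_num)
        · rw [show Nat.totient 9 = 6 by decide]
          refine A_lt_gen (Nat.one_le_iff_ne_zero.mpr (by positivity))
            (Nat.one_le_iff_ne_zero.mpr (by positivity)) (by norm_num)
            (by norm_num : 2^11 ≤ 3^7) ?_
          rw [show j+3-1 = j+2 from rfl]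
          exact even_case_helper j (by norm_num) (by norm_num)
        · rw [show Nat.totient 15 = 8 by decide]
          refine A_lt_gen (Nat.one_le_iff_ne_zero.mpr (by positivity))
            (Nat.one_le_iff_ne_zero.mpr (by positivity)) (by norm_num)
            (by norm_num : 2^11 ≤ 3^7) ?_
          rw [show j+3-1 = j+2 from rfl]
          exact even_case_helper j (by norm_num) (by norm_num)
    · -- n ∉ S : use the strong bound
      obtain ⟨j, rfl⟩ : ∃ j, k = j + 1 := ⟨k - 1, by omega⟩
      rw [htot, ← ht, show j+1-1 = j from rfl]
      have e0 : 2 ^ (j+1) * n = 2^j * (2 * n) := by ring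
      rw [e0, A_mul]
      have h2le : ((2^j:ℕ):ℝ)^al ≤ (2:ℝ)^j := by
        rw [A_pow]
        refine pow_le_pow_left₀ (by positivity) ?_ j
        have := A_le_gen (x := 2) (y := 2) (a := 2) (b := 3) (by norm_num) (by norm_num)
          (by norm_num) (by norm_num)
        exact_mod_cast this
      have hApos : 0 < ((2^j:ℕ):ℝ)^al := A_pos (Nat.one_le_iff_ne_zero.mpr (by positivity))
      have htpos : (0:ℝ) < (Nat.totient n : ℝ) := by
        exact_mod_cast Nat.totient_pos.mpr hn0
      calc ((2^j:ℕ):ℝ)^al * ((2*n:ℕ):ℝ)^al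
          < ((2^j:ℕ):ℝ)^al * (Nat.totient n : ℝ) := mul_lt_mul_of_pos_left hbig hApos
      _ ≤ (2:ℝ)^j * (Nat.totient n : ℝ) := mul_le_mul_of_nonneg_right h2le htpos.le
      _ = ((2^j * Nat.totient n : ℕ) : ℝ) := by push_cast; ring
  · -- m odd
    rcases claimO m hodd with hmS | hbig
    · simp only [Finset.mem_insert, Finset.mem_singleton] at hmS
      rcases hmS with rfl | rfl | rfl | rfl | rfl
      · exact absurd (by decide) hmE
      · exact absurd (by decide) hmE
      · rw [show Nat.totient 5 = 4 by decide]
        exact_mod_cast A_lt_gen (by norm_num) (by norm_num) (by norm_num)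
          (by norm_num : 2^3 ≤ 3^2) (by norm_num : 5^2 < 4^3)
      · rw [show Nat.totient 9 = 6 by decide]
        exact_mod_cast A_lt_gen (by norm_num) (by norm_num) (by norm_num)
          (by norm_num : 2^3 ≤ 3^2) (by norm_num : 9^2 < 6^3)
      · rw [show Nat.totient 15 = 8 by decide]
        exact_mod_cast A_lt_gen (by norm_num) (by norm_num) (by norm_num)
          (by norm_num : 2^3 ≤ 3^2) (by norm_num : 15^2 < 8^3)
    · exact lt_of_le_of_lt (A_mono (by omega : m ≤ 2*m)) hbig

/-- φ(m) ≤ m^(log 2/log 3) holds exactly for m ∈ {1,2,3,4,6,10,12,18,30}; in particular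
φ(m) > m^(log 2/log 3) for all m ≥ 31. -/
theorem stmt_3 :
    (∀ m : ℕ, 31 ≤ m → (m : ℝ) ^ (Real.log 2 / Real.log 3) < Nat.totient m) ∧
    (∀ m : ℕ, 1 ≤ m →
      ((Nat.totient m : ℝ) ≤ (m : ℝ) ^ (Real.log 2 / Real.log 3) ↔
        m ∈ ({1, 2, 3, 4, 6, 10, 12, 18, 30} : Set ℕ))) := by
  have hal : Real.log 2 / Real.log 3 = al := rfl
  constructor
  · intro m hm
    rw [hal]
    rcases claimC m (by omega) with hE | h
    · exfalso
      simp only [Finset.mem_insert, Finset.mem_singleton] at hE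
      omega
    · exact h
  · intro m hm
    rw [hal]
    constructor
    · intro hle
      rcases claimC m hm with hE | h
      · simp only [Finset.mem_insert, Finset.mem_singleton] at hE
        simp only [Set.mem_insert_iff, Set.mem_singleton_iff]
        tauto
      · exact absurd hle (not_le.mpr h)
    · intro hE
      simp only [Set.mem_insert_iff, Set.mem_singleton_iff] at hE
      rcases hE with rfl | rfl | rfl | rfl | rfl | rfl | rfl | rfl | rfl
      · rw [show Nat.totient 1 = 1 by decide]
        exact_mod_cast le_A_gen (x := 1) (y := 1) (a := 0) (b := 1) (by norm_num) (by norm_num) (by norm_num)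
      · rw [show Nat.totient 2 = 1 by decide]
        exact_mod_cast le_A_gen (x := 2) (y := 1) (a := 0) (b := 1) (by norm_num) (by norm_num) (by norm_num)
      · rw [show Nat.totient 3 = 2 by decide]
        exact_mod_cast le_A_gen (x := 3) (y := 2) (a := 1) (b := 1) (by norm_num) (by norm_num) (by norm_num)
      · rw [show Nat.totient 4 = 2 by decide]
        exact_mod_cast le_A_gen (x := 4) (y := 2) (a := 1) (b := 1) (by norm_num) (by norm_num) (by norm_num)
      · rw [show Nat.totient 6 = 2 by decide]
        exact_mod_cast le_A_gen (x := 6) (y := 2) (a := 1) (b := 1) (by norm_num) (by norm_num) (by norm_num)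
      · rw [show Nat.totient 10 = 4 by decide]
        exact_mod_cast le_A_gen (x := 10) (y := 4) (a := 2) (b := 1) (by norm_num) (by norm_num) (by norm_num)
      · rw [show Nat.totient 12 = 4 by decide]
        exact_mod_cast le_A_gen (x := 12) (y := 4) (a := 2) (b := 1) (by norm_num) (by norm_num) (by norm_num)
      · rw [show Nat.totient 18 = 6 by decide]
        exact_mod_cast le_A_gen (x := 18) (y := 6) (a := 13) (b := 5) (by norm_num) (by norm_num) (by norm_num)
      · rw [show Nat.totient 30 = 8 by decide]
        exact_mod_cast le_A_gen (x := 30) (y := 8) (a := 3) (b := 1) (by norm_num) (by norm_num) (by norm_num)
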